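/- Let u(x,t) := ½|x|² − t + δ ln R on the region R := (|x|² − t)^{1/2} > 2 of ℝⁿ × (−∞,0], with δ > 0. Then −u_t · det(D²ₓu) = 1 + δ(n + ½) R^{−2} − 2δ |x|² R^{−4} + O(R^{−4}) as R → ∞; in particular −u_t det D²ₓu = 1 + O(R^{−2}). -/

import Mathlib

open Real RealInnerProductSpace

section aux
variable {E : Type*} [NormedAddCommGroup E] [InnerProductSpace ℝ E]

theorem my_time_deriv (a δ t : ℝ) (hb : 0 < a - t) :
    deriv (fun s => a / 2 - s + δ * Real.log (Real.sqrt (a - s))) t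
      = -1 - δ / (2 * (a - t)) := by
  have hev : (fun s => a / 2 - s + δ * Real.log (Real.sqrt (a - s)))
      =ᶠ[nhds t] (fun s => a / 2 - s + δ / 2 * Real.log (a - s)) := by
    have hcont : ContinuousAt (fun s => a - s) t := by fun_prop
    filter_upwards [hcont.eventually (lt_mem_nhds hb)] with s hs
    rw [Real.log_sqrt hs.le]; ring
  rw [hev.deriv_eq]
  have h1 : HasDerivAt (fun s => a - s) (-1) t := by
    simpa using ((hasDerivAt_id t).const_sub a)
  have h2 : HasDerivAt (fun s => Real.log (a - s)) (-1 / (a - t)) t :=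
    h1.log hb.ne'
  have h3 : HasDerivAt (fun s => a / 2 - s + δ / 2 * Real.log (a - s))
      (-1 + δ / 2 * (-1 / (a - t))) t := by
    have := ((hasDerivAt_id t).const_sub (a/2)).add (h2.const_mul (δ/2))
    exact this
  rw [h3.deriv]; field_simp; ring

theorem my_grad_hasFDeriv (t δ : ℝ) (y : E) (hb : 0 < ‖y‖ ^ 2 - t) :
    HasFDerivAt (fun z : E => ‖z‖ ^ 2 / 2 - t + δ * Real.log (Real.sqrt (‖z‖ ^ 2 - t)))
      ((1 + δ / (‖y‖ ^ 2 - t)) • innerSL ℝ y) y := by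
  have hev : (fun z : E => ‖z‖ ^ 2 / 2 - t + δ * Real.log (Real.sqrt (‖z‖ ^ 2 - t)))
      =ᶠ[nhds y] (fun z : E => (1:ℝ)/2 * ‖z‖ ^ 2 - t + δ / 2 * Real.log (‖z‖ ^ 2 - t)) := by
    have hcont : ContinuousAt (fun z : E => ‖z‖ ^ 2 - t) y := by fun_prop
    filter_upwards [hcont.eventually (lt_mem_nhds hb)] with z hz
    rw [Real.log_sqrt hz.le]; ring
  have h1 : HasFDerivAt (fun z : E => ‖z‖ ^ 2) (2 • innerSL ℝ y) y :=
    (hasStrictFDerivAt_norm_sq y).hasFDerivAt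
  have h3 : HasFDerivAt (fun z : E => Real.log (‖z‖ ^ 2 - t))
      ((‖y‖ ^ 2 - t)⁻¹ • (2 • innerSL ℝ y)) y := (h1.sub_const t).log hb.ne'
  have h4 := ((h1.const_mul ((1:ℝ)/2)).sub_const t).add (h3.const_mul (δ / 2))
  refine HasFDerivAt.congr_of_eventuallyEq ?_ hev
  refine h4.congr_fderiv ?_
  ext v
  simp only [ContinuousLinearMap.smul_apply, ContinuousLinearMap.add_apply,
    ContinuousLinearMap.coe_smul', Pi.smul_apply, smul_eq_mul]
  field_simp
  ring

theorem my_hess_val (t δ : ℝ) (x w v : E) (hb : 0 < ‖x‖ ^ 2 - t) :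
    fderiv ℝ (fun y : E =>
        fderiv ℝ (fun z : E => ‖z‖ ^ 2 / 2 - t + δ * Real.log (Real.sqrt (‖z‖ ^ 2 - t))) y w) x v
      = (1 + δ / (‖x‖ ^ 2 - t)) * ⟪v, w⟫
        - 2 * δ / (‖x‖ ^ 2 - t) ^ 2 * (⟪x, w⟫ * ⟪x, v⟫) := by
  have hcont : ContinuousAt (fun z : E => ‖z‖ ^ 2 - t) x := by fun_prop
  have hev : (fun y : E =>
        fderiv ℝ (fun z : E => ‖z‖ ^ 2 / 2 - t + δ * Real.log (Real.sqrt (‖z‖ ^ 2 - t))) y w)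
      =ᶠ[nhds x] (fun y : E => (1 + δ * (‖y‖ ^ 2 - t)⁻¹) * ⟪w, y⟫) := by
    filter_upwards [hcont.eventually (lt_mem_nhds hb)] with y hy
    rw [(my_grad_hasFDeriv t δ y hy).fderiv]
    simp [real_inner_comm, div_eq_mul_inv]
  rw [hev.fderiv_eq]
  have h1 : HasFDerivAt (fun z : E => ‖z‖ ^ 2) (2 • innerSL ℝ x) x :=
    (hasStrictFDerivAt_norm_sq x).hasFDerivAt
  have hφ : HasFDerivAt (fun y : E => 1 + δ * (‖y‖ ^ 2 - t)⁻¹)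
      (δ • ((-((‖x‖ ^ 2 - t) ^ 2)⁻¹) • (2 • innerSL ℝ x))) x := by
    exact (((hasDerivAt_inv hb.ne').comp_hasFDerivAt x (h1.sub_const t)).const_mul δ).const_add 1
  have hψ : HasFDerivAt (fun y : E => ⟪w, y⟫) (innerSL ℝ w) x := (innerSL ℝ w).hasFDerivAt
  have hm := hφ.mul hψ
  rw [show (fun y : E => (1 + δ * (‖y‖ ^ 2 - t)⁻¹) * ⟪w, y⟫) = ((fun y : E => 1 + δ * (‖y‖ ^ 2 - t)⁻¹) * fun y => ⟪w, y⟫) from rfl, hm.fderiv]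
  simp only [ContinuousLinearMap.add_apply, ContinuousLinearMap.coe_smul', Pi.smul_apply,
    ContinuousLinearMap.smul_apply, smul_eq_mul, innerSL_apply_apply]
  rw [real_inner_comm w x, real_inner_comm w v]
  field_simp
  ring

end aux

theorem my_det_aux (n : ℕ) (hn : 1 ≤ n) (a c : ℝ) (ha : a ≠ 0) (x : Fin n → ℝ) :
    Matrix.det (Matrix.of fun i j : Fin n =>
        a * (if i = j then 1 else 0) + c * (x i * x j))
      = a ^ n + c * a ^ (n - 1) * ∑ i, x i ^ 2 := by
  have key : (Matrix.of fun i j : Fin n =>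
        a * (if i = j then 1 else 0) + c * (x i * x j))
      = a • (1 + Matrix.replicateCol Unit (fun i => c / a * x i) * Matrix.replicateRow Unit x) := by
    ext i j
    simp only [Matrix.of_apply, Matrix.smul_apply, Matrix.add_apply, Matrix.one_apply,
      Matrix.mul_apply, Matrix.replicateCol_apply, Matrix.replicateRow_apply, Finset.univ_unique,
      Finset.sum_singleton, smul_eq_mul]
    split <;> field_simp <;> ring
  rw [key, Matrix.det_smul, Matrix.det_one_add_replicateCol_mul_replicateRow]
  simp only [dotProduct, smul_eq_mul, Fintype.card_fin]
  have hpow : a ^ n = a * a ^ (n - 1) := by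
    conv_lhs => rw [← Nat.succ_pred_eq_of_pos hn]
    rw [Nat.pred_eq_sub_one, pow_succ]; ring
  have hS : ∑ i, x i * (c / a * x i) = c / a * ∑ i, x i ^ 2 := by
    rw [Finset.mul_sum]
    exact Finset.sum_congr rfl fun i _ => by ring
  rw [hS, hpow]
  field_simp

theorem my_pow_upper (k : ℕ) (ε : ℝ) (hε0 : 0 ≤ ε) (hε1 : ε ≤ 1) :
    (1 + ε) ^ k ≤ 1 + k * ε + 4 ^ k * ε ^ 2 := by
  induction k with
  | zero => simp; positivity
  | succ k ih =>
    have hk4 : (k : ℝ) ≤ 4 ^ k := by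
      calc (k : ℝ) ≤ 2 ^ k := by exact_mod_cast Nat.le_of_lt (Nat.lt_two_pow_self (n := k))
      _ ≤ 4 ^ k := by gcongr <;> norm_num
    have hnn : (0:ℝ) ≤ 1 + ε := by linarith
    have hc : (0:ℝ) < 4 ^ k := by positivity
    rw [pow_succ]
    have h4s : (4:ℝ) ^ (k+1) = 4 * 4 ^ k := by rw [pow_succ]; ring
    rw [h4s]
    push_cast
    nlinarith [mul_le_mul_of_nonneg_right ih hnn, mul_nonneg (sq_nonneg ε) (sub_nonneg.2 hk4),
      mul_nonneg (mul_nonneg (sq_nonneg ε) (sub_nonneg.2 hε1)) hc.le]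

theorem my_poly_bound (k : ℕ) (ε m : ℝ) (hε0 : 0 ≤ ε) (hε1 : ε ≤ 1) (hm0 : 0 ≤ m) (hm1 : m ≤ 1) :
    |(1 + ε/2) * ((1 + ε) ^ (k+1) - 2*ε*m*(1 + ε) ^ k) - (1 + ((k:ℝ) + 3/2)*ε - 2*ε*m)|
      ≤ 16 * 4 ^ k * ε ^ 2 := by
  have hq1 : 1 + (k:ℝ) * ε ≤ (1 + ε) ^ k := by
    have := one_add_mul_le_pow (a := ε) (by linarith) k
    linarith
  have hq2 := my_pow_upper k ε hε0 hε1
  have hk4 : (k : ℝ) ≤ 4 ^ k := by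
    calc (k : ℝ) ≤ 2 ^ k := by exact_mod_cast Nat.le_of_lt (Nat.lt_two_pow_self (n := k))
    _ ≤ 4 ^ k := by gcongr <;> norm_num
  have h14 : (1:ℝ) ≤ 4 ^ k := by
    calc (1:ℝ) = 1 ^ k := (one_pow k).symm
    _ ≤ 4 ^ k := by gcongr <;> norm_num
  rw [pow_succ, abs_le]
  set q : ℝ := (1 + ε) ^ k with hq
  set c : ℝ := 4 ^ k with hc
  have hK0 : (0:ℝ) ≤ k := Nat.cast_nonneg k
  have hq0 : (0:ℝ) ≤ q := by nlinarith
  have hεε : ε ^ 2 ≤ ε := by nlinarith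
  constructor
  · nlinarith [mul_nonneg (mul_nonneg hε0 hm0) (sub_nonneg.2 hq1),
      mul_le_mul_of_nonneg_left hq2 (mul_nonneg hε0 hm0),
      mul_le_mul_of_nonneg_left hq2 (mul_nonneg (mul_nonneg hε0 hε0) hm0),
      mul_nonneg (mul_nonneg hε0 hε0) hK0, mul_nonneg hε0 hε0,
      mul_nonneg (mul_nonneg (mul_nonneg hε0 hε0) hε0) hK0,
      mul_nonneg (mul_nonneg hε0 hε0) (sub_nonneg.2 hk4),
      mul_nonneg (mul_nonneg (mul_nonneg hε0 hε0) hε0) (sub_nonneg.2 hk4),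
      mul_le_mul_of_nonneg_left hm1 (mul_nonneg (mul_nonneg hε0 hε0) hq0)]
  · nlinarith [mul_nonneg (mul_nonneg hε0 hm0) (sub_nonneg.2 hq1),
      mul_le_mul_of_nonneg_left hq2 hε0,
      mul_le_mul_of_nonneg_left hq2 (mul_nonneg hε0 hε0),
      mul_nonneg (mul_nonneg hε0 hε0) hK0, mul_nonneg hε0 hε0,
      mul_nonneg (mul_nonneg (mul_nonneg hε0 hε0) hε0) hK0,
      mul_nonneg (mul_nonneg hε0 hε0) (sub_nonneg.2 hk4),
      mul_nonneg (mul_nonneg (mul_nonneg hε0 hε0) hε0) (sub_nonneg.2 hk4),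
      mul_nonneg (mul_nonneg hε0 hm0) hq0]

/-- Sharpness example for `β = 2`: for `u(x,t) = ½|x|² − t + δ ln R` with
`R = (|x|²−t)^{1/2}`, one has
`−u_t det D²ₓu = 1 + δ(n+½)R^{−2} − 2δ|x|²R^{−4} + O(R^{−4})`. -/
theorem sharpness_example_beta_eq_two (n : ℕ) (hn : 1 ≤ n) (δ : ℝ) (hδ : 0 < δ) :
    ∃ C > 0, ∃ R₀ > 2, ∀ (x : EuclideanSpace ℝ (Fin n)) (t : ℝ), t ≤ 0 →
      R₀ ≤ Real.sqrt (‖x‖ ^ 2 - t) →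
      letI u : EuclideanSpace ℝ (Fin n) → ℝ → ℝ :=
        fun y s => ‖y‖ ^ 2 / 2 - s + δ * Real.log (Real.sqrt (‖y‖ ^ 2 - s))
      letI R : ℝ := Real.sqrt (‖x‖ ^ 2 - t)
      |(-(deriv (fun s => u x s) t)) *
          (Matrix.det (Matrix.of fun i j : Fin n =>
            fderiv ℝ (fun y => fderiv ℝ (fun z => u z t) y (EuclideanSpace.single j 1)) x
              (EuclideanSpace.single i 1))) -
        (1 + δ * ((n : ℝ) + 1 / 2) * R ^ (-(2:ℝ)) - 2 * δ * ‖x‖ ^ 2 * R ^ (-(4:ℝ)))|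
        ≤ C * R ^ (-(4:ℝ)) := by
  refine ⟨16 * 4 ^ (n-1) * δ ^ 2, by positivity, 3 + Real.sqrt δ,
    by linarith [Real.sqrt_nonneg δ], ?_⟩
  intro x t ht hR
  set b : ℝ := ‖x‖ ^ 2 - t with hbdef
  -- basic facts about b and R
  have hR3 : (3:ℝ) ≤ Real.sqrt b := le_trans (by linarith [Real.sqrt_nonneg δ]) hR
  have hb0 : 0 ≤ b := by
    by_contra h
    push_neg at h
    rw [Real.sqrt_eq_zero_of_nonpos h.le] at hR3
    linarith
  have hRb : Real.sqrt b ^ 2 = b := Real.sq_sqrt hb0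
  have hb9 : (9:ℝ) ≤ b := by nlinarith
  have hb : 0 < b := by linarith
  have hbδ : δ ≤ b := by
    have h1 : Real.sqrt δ ≤ Real.sqrt b := le_trans (by linarith [Real.sqrt_nonneg δ]) hR
    nlinarith [Real.sq_sqrt hδ.le, Real.sqrt_nonneg δ, Real.sqrt_nonneg b]
  -- rpow simplifications
  have h2pow : Real.sqrt b ^ (-(2:ℝ)) = b⁻¹ := by
    rw [show (-(2:ℝ)) = -((2:ℕ):ℝ) by norm_num, Real.rpow_neg (Real.sqrt_nonneg b),
      Real.rpow_natCast, hRb]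
  have h4pow : Real.sqrt b ^ (-(4:ℝ)) = (b ^ 2)⁻¹ := by
    rw [show (-(4:ℝ)) = -((4:ℕ):ℝ) by norm_num, Real.rpow_neg (Real.sqrt_nonneg b),
      Real.rpow_natCast, show (4:ℕ) = 2 * 2 from rfl, pow_mul, hRb]
  -- time derivative
  have htd : deriv (fun s => ‖x‖ ^ 2 / 2 - s + δ * Real.log (Real.sqrt (‖x‖ ^ 2 - s))) t
      = -1 - δ / (2 * b) := my_time_deriv (‖x‖ ^ 2) δ t hb
  -- Hessian matrix
  have ha : (1 + δ / b) ≠ 0 := by positivity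
  have hMat : (Matrix.of fun i j : Fin n =>
      fderiv ℝ (fun y => fderiv ℝ
        (fun z : EuclideanSpace ℝ (Fin n) => ‖z‖ ^ 2 / 2 - t + δ * Real.log (Real.sqrt (‖z‖ ^ 2 - t)))
        y (EuclideanSpace.single j 1)) x (EuclideanSpace.single i 1))
      = Matrix.of fun i j : Fin n =>
        (1 + δ / b) * (if i = j then 1 else 0) + (-(2 * δ / b ^ 2)) * (x i * x j) := by
    ext i j
    simp only [Matrix.of_apply]
    rw [my_hess_val t δ x (EuclideanSpace.single j 1) (EuclideanSpace.single i 1) hb]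
    simp only [EuclideanSpace.inner_single_left, EuclideanSpace.inner_single_right,
      EuclideanSpace.single_apply, RCLike.star_def, conj_trivial, one_mul, mul_one]
    rw [← hbdef]
    by_cases hij : i = j
    · simp [hij]; ring
    · simp only [hij, if_false, Ne.symm hij]
      simp [hij, mul_comm]
  have hdet : Matrix.det (Matrix.of fun i j : Fin n =>
        (1 + δ / b) * (if i = j then 1 else 0) + (-(2 * δ / b ^ 2)) * (x i * x j))
      = (1 + δ / b) ^ n + (-(2 * δ / b ^ 2)) * (1 + δ / b) ^ (n - 1) * ∑ i, x i ^ 2 :=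
    my_det_aux n hn (1 + δ / b) (-(2 * δ / b ^ 2)) ha (fun i => x i)
  have hxsum : ∑ i, x i ^ 2 = ‖x‖ ^ 2 := by
    rw [EuclideanSpace.norm_eq, Real.sq_sqrt (by positivity)]
    exact Finset.sum_congr rfl fun i _ => by rw [Real.norm_eq_abs, sq_abs]
  -- assemble
  show |(-(deriv (fun s => ‖x‖ ^ 2 / 2 - s + δ * Real.log (Real.sqrt (‖x‖ ^ 2 - s))) t)) *
      Matrix.det (Matrix.of fun i j : Fin n =>
        fderiv ℝ (fun y => fderiv ℝ
          (fun z : EuclideanSpace ℝ (Fin n) => ‖z‖ ^ 2 / 2 - t + δ * Real.log (Real.sqrt (‖z‖ ^ 2 - t)))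
          y (EuclideanSpace.single j 1)) x (EuclideanSpace.single i 1)) -
      (1 + δ * ((n : ℝ) + 1 / 2) * Real.sqrt b ^ (-(2:ℝ)) -
        2 * δ * ‖x‖ ^ 2 * Real.sqrt b ^ (-(4:ℝ)))| ≤
      16 * 4 ^ (n-1) * δ ^ 2 * Real.sqrt b ^ (-(4:ℝ))
  rw [htd, hMat, hdet, hxsum, h2pow, h4pow]
  -- now pure algebra + poly_bound
  set ε : ℝ := δ / b with hε
  set m : ℝ := ‖x‖ ^ 2 / b with hm
  have hε0 : 0 ≤ ε := by positivity
  have hε1 : ε ≤ 1 := by rw [hε]; rw [div_le_one hb]; exact hbδ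
  have hm0 : 0 ≤ m := by positivity
  have hm1 : m ≤ 1 := by rw [hm, div_le_one hb]; nlinarith
  clear_value b ε m
  have hkn : n - 1 + 1 = n := Nat.succ_pred_eq_of_pos hn
  have hkc : ((n - 1 : ℕ) : ℝ) = (n : ℝ) - 1 := by
    rw [Nat.cast_sub hn]; norm_num
  have key := my_poly_bound (n - 1) ε m hε0 hε1 hm0 hm1
  rw [hkn, hkc] at key
  have heq1 : (-(-1 - δ / (2 * b))) *
      ((1 + ε) ^ n + (-(2 * δ / b ^ 2)) * (1 + ε) ^ (n - 1) * ‖x‖ ^ 2) -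
      (1 + δ * ((n : ℝ) + 1 / 2) * b⁻¹ - 2 * δ * ‖x‖ ^ 2 * (b ^ 2)⁻¹)
      = (1 + ε/2) * ((1 + ε) ^ n - 2*ε*m*(1 + ε) ^ (n-1)) - (1 + (((n:ℝ) - 1) + 3/2)*ε - 2*ε*m) := by
    have e1 : δ / (2 * b) = ε / 2 := by rw [hε]; ring
    have e2 : (-(2 * δ / b ^ 2)) * ‖x‖ ^ 2 = -(2 * ε * m) := by
      rw [hε, hm]; ring
    have e3 : δ * ((n : ℝ) + 1 / 2) * b⁻¹ = (((n:ℝ) - 1) + 3/2) * ε := by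
      rw [hε]; ring
    have e4 : 2 * δ * ‖x‖ ^ 2 * (b ^ 2)⁻¹ = 2 * ε * m := by
      rw [hε, hm]; ring
    set A : ℝ := (1 + ε) ^ n
    set B : ℝ := (1 + ε) ^ (n - 1)
    calc (-(-1 - δ / (2 * b))) * (A + (-(2 * δ / b ^ 2)) * B * ‖x‖ ^ 2) -
        (1 + δ * ((n : ℝ) + 1 / 2) * b⁻¹ - 2 * δ * ‖x‖ ^ 2 * (b ^ 2)⁻¹)
        = (1 + δ / (2*b)) * (A + ((-(2 * δ / b ^ 2)) * ‖x‖ ^ 2) * B) -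
          (1 + δ * ((n : ℝ) + 1 / 2) * b⁻¹ - 2 * δ * ‖x‖ ^ 2 * (b ^ 2)⁻¹) := by ring
      _ = (1 + ε/2) * (A - 2*ε*m*B) - (1 + (((n:ℝ) - 1) + 3/2)*ε - 2*ε*m) := by
          rw [e1, e2, e3, e4]; ring
  have heq2 : 16 * 4 ^ (n-1) * ε ^ 2 = 16 * 4 ^ (n-1) * δ ^ 2 * (b ^ 2)⁻¹ := by
    rw [hε]; ring
  rw [heq1, ← heq2]
  exact key
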